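/- Let n be an even positive integer and V a real n×n circulant symmetric positive definite matrix with block form V = [[V', V''], [V'', V']], F = F_{n/2}. Then Tr(F_n · log V) = log det(V' + V''F) − log det(V' − V''F), where log V is the matrix logarithm defined by the spectral calculus and both V' + V''F and V' − V''F are positive definite. -/

import Mathlib

set_option linter.unusedSectionVars false
set_option maxHeartbeats 1000000

open Matrix

/-- The `m × m` flip matrix `F_m`: with 0-based indices, entry `(i,j)` is `1`
iff `i + j = m - 1`. -/
noncomputable def flipMat (m : ℕ) : Matrix (Fin m) (Fin m) ℝ :=
  Matrix.of fun i j => if (i : ℕ) + (j : ℕ) = m - 1 then 1 else 0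

/-- Matrix logarithm defined via the continuous functional calculus
(spectral calculus). -/
noncomputable def mlog {k : ℕ} (M : Matrix (Fin k) (Fin k) ℝ) :
    Matrix (Fin k) (Fin k) ℝ :=
  cfc Real.log M


variable {k : Type*} [Fintype k] [DecidableEq k]

omit [Fintype k] in
lemma star_diagonal_real (g : k → ℝ) : star (Matrix.diagonal g) = Matrix.diagonal g := by
  rw [star_eq_conjTranspose, diagonal_conjTranspose]
  congr 1

noncomputable def conjDiagHom (U : Matrix k k ℝ) (hU : U ∈ unitary (Matrix k k ℝ))
    (d : k → ℝ) (s : Set ℝ) (hmem : ∀ i, d i ∈ s) :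
    C(s, ℝ) →⋆ₐ[ℝ] Matrix k k ℝ where
  toFun g := U * Matrix.diagonal (fun i => g ⟨d i, hmem i⟩) * star U
  map_one' := by
    show U * Matrix.diagonal (fun i => (1 : C(s,ℝ)) ⟨d i, hmem i⟩) * star U = 1
    simpa using (Unitary.mem_iff.mp hU).2
  map_mul' f g := by
    have h1 : star U * U = 1 := (Unitary.mem_iff.mp hU).1
    show U * Matrix.diagonal (fun i => (f * g) ⟨d i, hmem i⟩) * star U =
      (U * Matrix.diagonal (fun i => f ⟨d i, hmem i⟩) * star U) *
      (U * Matrix.diagonal (fun i => g ⟨d i, hmem i⟩) * star U)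
    calc U * Matrix.diagonal (fun i => (f * g) ⟨d i, hmem i⟩) * star U
        = U * (Matrix.diagonal (fun i => f ⟨d i, hmem i⟩) *
            ((star U * U) * Matrix.diagonal (fun i => g ⟨d i, hmem i⟩))) * star U := by
          rw [h1, one_mul, diagonal_mul_diagonal]; rfl
      _ = _ := by simp only [mul_assoc]
  map_zero' := by
    show U * Matrix.diagonal (fun i => (0 : C(s,ℝ)) ⟨d i, hmem i⟩) * star U = 0
    simp
  map_add' f g := by
    show U * Matrix.diagonal (fun i => (f + g) ⟨d i, hmem i⟩) * star U =
      U * Matrix.diagonal (fun i => f ⟨d i, hmem i⟩) * star U +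
      U * Matrix.diagonal (fun i => g ⟨d i, hmem i⟩) * star U
    have h : (fun i => (f + g) ⟨d i, hmem i⟩) =
        (fun i => f ⟨d i, hmem i⟩ + g ⟨d i, hmem i⟩) := rfl
    rw [h]
    rw [← Matrix.diagonal_add (fun i => f ⟨d i, hmem i⟩) (fun i => g ⟨d i, hmem i⟩),
      mul_add, add_mul]
  commutes' r := by
    show U * Matrix.diagonal (fun i => (algebraMap ℝ C(s,ℝ) r) ⟨d i, hmem i⟩) * star U = _
    have h2 : U * star U = 1 := (Unitary.mem_iff.mp hU).2
    have hd : Matrix.diagonal (fun _ : k => r) = r • (1 : Matrix k k ℝ) :=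
      (smul_one_eq_diagonal r).symm
    have : (fun i : k => (algebraMap ℝ C(s,ℝ) r) ⟨d i, hmem i⟩) = fun _ : k => r := rfl
    rw [this, hd, Algebra.algebraMap_eq_smul_one, mul_smul_comm, smul_mul_assoc, mul_one, h2]
  map_star' f := by
    show U * Matrix.diagonal (fun i => (star f) ⟨d i, hmem i⟩) * star U =
      star (U * Matrix.diagonal (fun i => f ⟨d i, hmem i⟩) * star U)
    have h : (fun i : k => (star f) ⟨d i, hmem i⟩) = fun i : k => f ⟨d i, hmem i⟩ := by
      funext i; exact star_trivial _
    rw [h, StarMul.star_mul, StarMul.star_mul, star_star, star_diagonal_real]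
    simp only [mul_assoc]

lemma cfc_conj_diag (U : Matrix k k ℝ) (hU : U ∈ unitary (Matrix k k ℝ)) (d : k → ℝ)
    (f : ℝ → ℝ) :
    cfc f (U * Matrix.diagonal d * star U) = U * Matrix.diagonal (f ∘ d) * star U := by
  set M := U * Matrix.diagonal d * star U with hMdef
  have hsa : _root_.IsSelfAdjoint M := by
    rw [_root_.IsSelfAdjoint, hMdef]
    simp only [StarMul.star_mul, star_star, star_diagonal_real, mul_assoc]
  have hspec : spectrum ℝ M = Set.range d := by
    rw [hMdef, show U = ((⟨U, hU⟩ : unitary (Matrix k k ℝ)) : Matrix k k ℝ) from rfl,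
      Unitary.spectrum_star_right_conjugate, _root_.spectrum_diagonal]
  have hmem : ∀ i, d i ∈ spectrum ℝ M := fun i => hspec ▸ ⟨i, rfl⟩
  set φ := conjDiagHom U hU d (spectrum ℝ M) hmem with hφ
  have h0 : FiniteDimensional ℝ C(spectrum ℝ M, ℝ) :=
    FiniteDimensional.of_injective (ContinuousMap.coeFnLinearMap ℝ (M := ℝ)) DFunLike.coe_injective
  have hcont : Continuous φ := φ.toAlgHom.toLinearMap.continuous_of_finiteDimensional
  have hid : φ (ContinuousMap.restrict (spectrum ℝ M) (ContinuousMap.id ℝ)) = M := rfl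
  have key := cfcHom_eq_of_continuous_of_map_id hsa φ hcont hid
  have hfc : ContinuousOn f (spectrum ℝ M) := by
    rw [continuousOn_iff_continuous_restrict]
    fun_prop
  rw [cfc_apply f M hsa hfc, key]
  rfl



section FlipLemmas
variable {m : ℕ}

lemma flip_eq_left (m : ℕ) :
    flipMat m = (1 : Matrix (Fin m) (Fin m) ℝ).submatrix Fin.rev id := by
  ext i j
  simp only [flipMat, Matrix.of_apply, Matrix.submatrix_apply, id_eq, Matrix.one_apply]
  have h1 := i.is_lt; have h2 := j.is_lt
  by_cases hc : (i : ℕ) + (j : ℕ) = m - 1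
  · rw [if_pos hc, if_pos (Fin.ext (show ((Fin.rev i : Fin m) : ℕ) = (j : ℕ) by
      rw [Fin.val_rev]; omega))]
  · rw [if_neg hc, if_neg (fun hcon => hc (by
      have := congrArg Fin.val hcon; rw [Fin.val_rev] at this; omega))]

lemma flip_eq_right (m : ℕ) :
    flipMat m = (1 : Matrix (Fin m) (Fin m) ℝ).submatrix id Fin.rev := by
  ext i j
  simp only [flipMat, Matrix.of_apply, Matrix.submatrix_apply, id_eq, Matrix.one_apply]
  have h1 := i.is_lt; have h2 := j.is_lt
  by_cases hc : (i : ℕ) + (j : ℕ) = m - 1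
  · rw [if_pos hc, if_pos (Fin.ext (show (i : ℕ) = ((Fin.rev j : Fin m) : ℕ) by
      rw [Fin.val_rev]; omega))]
  · rw [if_neg hc, if_neg (fun hcon => hc (by
      have := congrArg Fin.val hcon; rw [Fin.val_rev] at this; omega))]

lemma flip_mul (A : Matrix (Fin m) (Fin m) ℝ) :
    flipMat m * A = A.submatrix Fin.rev id := by
  rw [flip_eq_left]
  have h := Matrix.submatrix_mul_equiv (1 : Matrix (Fin m) (Fin m) ℝ) A
    Fin.rev (Equiv.refl (Fin m)) id
  simp only [Equiv.coe_refl, Matrix.submatrix_id_id, Matrix.one_mul] at h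
  exact h

lemma mul_flip (A : Matrix (Fin m) (Fin m) ℝ) :
    A * flipMat m = A.submatrix id Fin.rev := by
  rw [flip_eq_right]
  have h := Matrix.submatrix_mul_equiv A (1 : Matrix (Fin m) (Fin m) ℝ)
    id (Equiv.refl (Fin m)) Fin.rev
  simp only [Equiv.coe_refl, Matrix.submatrix_id_id, Matrix.mul_one] at h
  exact h

lemma flip_mul_flip : flipMat m * flipMat m = 1 := by
  rw [flip_mul, flip_eq_left, Matrix.submatrix_submatrix]
  have : Fin.rev ∘ Fin.rev = (id : Fin m → Fin m) := funext fun i => Fin.rev_rev i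
  rw [this]
  simp [Matrix.submatrix_id_id]

lemma flip_star : star (flipMat m) = flipMat m := by
  ext i j
  simp only [Matrix.star_apply, flipMat, Matrix.of_apply, star_trivial]
  rw [Nat.add_comm]

end FlipLemmas

section Traces
variable {k l : Type*} [Fintype k] [DecidableEq k] [Fintype l] [DecidableEq l]

lemma trace_fromBlocks' (A : Matrix k k ℝ) (B : Matrix k l ℝ) (C : Matrix l k ℝ)
    (D : Matrix l l ℝ) : (Matrix.fromBlocks A B C D).trace = A.trace + D.trace := by
  simp [Matrix.trace, Fintype.sum_sum_type, Matrix.diag]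

lemma trace_submatrix_equiv' (e : l ≃ k) (A : Matrix k k ℝ) :
    (A.submatrix e e).trace = A.trace := by
  simp only [Matrix.trace, Matrix.diag, Matrix.submatrix_apply]
  exact Equiv.sum_comp e (fun i => A i i)

lemma trace_conj_diag (U : Matrix k k ℝ) (hU : U ∈ unitary (Matrix k k ℝ)) (d : k → ℝ) :
    (U * Matrix.diagonal d * star U).trace = ∑ i, d i := by
  rw [Matrix.trace_mul_cycle, (Unitary.mem_iff.mp hU).1, Matrix.one_mul]
  simp [Matrix.trace, Matrix.diag]

end Traces

section PosDefLemmas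
variable {k l : Type*} [Fintype k] [DecidableEq k] [Fintype l] [DecidableEq l]

lemma posDef_submatrix_equiv {M : Matrix k k ℝ} (hM : M.PosDef) (e : l ≃ k) :
    (M.submatrix e e).PosDef := by
  refine Matrix.PosDef.of_dotProduct_mulVec_pos (hM.1.submatrix e) fun x hx => ?_
  have hy : (x ∘ e.symm) ≠ 0 := by
    intro h0
    apply hx
    funext i
    have := congrFun h0 (e i)
    simpa using this
  have := hM.dotProduct_mulVec_pos hy
  rw [Matrix.submatrix_mulVec_equiv]
  calc (Star.star x) ⬝ᵥ ((M *ᵥ (x ∘ e.symm)) ∘ e)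
      = ∑ i, Star.star (x i) * (M *ᵥ (x ∘ e.symm)) (e i) := rfl
    _ = ∑ j, Star.star ((x ∘ e.symm) j) * (M *ᵥ (x ∘ e.symm)) j := by
        rw [← Equiv.sum_comp e (fun j => Star.star ((x ∘ e.symm) j) * (M *ᵥ (x ∘ e.symm)) j)]
        simp
    _ = (Star.star (x ∘ e.symm)) ⬝ᵥ (M *ᵥ (x ∘ e.symm)) := rfl
    _ > 0 := this

lemma posDef_conj_unitary {M B : Matrix k k ℝ} (hM : M.PosDef)
    (hB : B ∈ unitary (Matrix k k ℝ)) : (star B * M * B).PosDef := by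
  have h1 : star B * B = 1 := (Unitary.mem_iff.mp hB).1
  refine Matrix.PosDef.of_dotProduct_mulVec_pos ?_ fun x hx => ?_
  · rw [star_eq_conjTranspose]
    exact Matrix.isHermitian_conjTranspose_mul_mul B hM.1
  · have hBx : B *ᵥ x ≠ 0 := by
      intro h0
      apply hx
      have : (star B * B) *ᵥ x = star B *ᵥ (B *ᵥ x) := by rw [← Matrix.mulVec_mulVec]
      rw [h0, Matrix.mulVec_zero, h1, Matrix.one_mulVec] at this
      exact this
    rw [star_eq_conjTranspose]
    simpa only [Matrix.star_mulVec, Matrix.dotProduct_mulVec, Matrix.vecMul_vecMul]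
      using hM.dotProduct_mulVec_pos hBx

lemma posDef_fromBlocks₁₁ {A : Matrix k k ℝ} {B : Matrix k l ℝ} {C : Matrix l k ℝ}
    {D : Matrix l l ℝ} (h : (Matrix.fromBlocks A B C D).PosDef) : A.PosDef := by
  refine Matrix.PosDef.of_dotProduct_mulVec_pos ?_ fun x hx => ?_
  · have h1 := h.1
    rw [Matrix.IsHermitian, Matrix.fromBlocks_conjTranspose] at h1
    have h2 := congrArg Matrix.toBlocks₁₁ h1
    simp only [Matrix.toBlocks_fromBlocks₁₁] at h2
    exact h2
  · have hy : (Sum.elim x 0 : k ⊕ l → ℝ) ≠ 0 := by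
      intro h0
      apply hx
      funext i
      exact congrFun h0 (Sum.inl i)
    have := h.dotProduct_mulVec_pos hy
    rw [Matrix.fromBlocks_mulVec] at this
    simp only [Sum.elim_comp_inl, Sum.elim_comp_inr, Matrix.mulVec_zero, add_zero] at this
    have hstar : (Star.star (Sum.elim x 0) : k ⊕ l → ℝ)
        = Sum.elim (Star.star x) (0 : l → ℝ) := by
      funext i
      cases i <;> simp [Pi.star_apply]
    rw [hstar, sumElim_dotProduct_sumElim] at this
    simpa using this

lemma posDef_fromBlocks₂₂ {A : Matrix k k ℝ} {B : Matrix k l ℝ} {C : Matrix l k ℝ}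
    {D : Matrix l l ℝ} (h : (Matrix.fromBlocks A B C D).PosDef) : D.PosDef := by
  refine Matrix.PosDef.of_dotProduct_mulVec_pos ?_ fun x hx => ?_
  · have h1 := h.1
    rw [Matrix.IsHermitian, Matrix.fromBlocks_conjTranspose] at h1
    have h2 := congrArg Matrix.toBlocks₂₂ h1
    simp only [Matrix.toBlocks_fromBlocks₂₂] at h2
    exact h2
  · have hy : (Sum.elim 0 x : k ⊕ l → ℝ) ≠ 0 := by
      intro h0
      apply hx
      funext i
      exact congrFun h0 (Sum.inr i)
    have := h.dotProduct_mulVec_pos hy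
    rw [Matrix.fromBlocks_mulVec] at this
    simp only [Sum.elim_comp_inl, Sum.elim_comp_inr, Matrix.mulVec_zero, zero_add] at this
    have hstar : (Star.star (Sum.elim 0 x) : k ⊕ l → ℝ)
        = Sum.elim (0 : k → ℝ) (Star.star x) := by
      funext i
      cases i <;> simp [Pi.star_apply]
    rw [hstar, sumElim_dotProduct_sumElim] at this
    simpa using this

lemma sum_log_eigenvalues {P : Matrix k k ℝ} (hP : P.PosDef) :
    ∑ i, Real.log (hP.1.eigenvalues i) = Real.log P.det := by
  rw [hP.1.det_eq_prod_eigenvalues, ← Real.log_prod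
    (fun i _ => ne_of_gt (hP.eigenvalues_pos i))]
  norm_num

end PosDefLemmas


section ReIdx
variable {m : ℕ}

noncomputable def reIdx (m : ℕ) (A : Matrix (Fin m ⊕ Fin m) (Fin m ⊕ Fin m) ℝ) :
    Matrix (Fin (m + m)) (Fin (m + m)) ℝ :=
  A.submatrix finSumFinEquiv.symm finSumFinEquiv.symm

lemma reIdx_mul (A B : Matrix (Fin m ⊕ Fin m) (Fin m ⊕ Fin m) ℝ) :
    reIdx m (A * B) = reIdx m A * reIdx m B :=
  (Matrix.submatrix_mul_equiv A B _ finSumFinEquiv.symm _).symm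

lemma reIdx_star (A : Matrix (Fin m ⊕ Fin m) (Fin m ⊕ Fin m) ℝ) :
    reIdx m (star A) = star (reIdx m A) := by
  rw [star_eq_conjTranspose, star_eq_conjTranspose, reIdx, reIdx, conjTranspose_submatrix]

lemma reIdx_diag (d : Fin m ⊕ Fin m → ℝ) :
    reIdx m (Matrix.diagonal d) = Matrix.diagonal (d ∘ finSumFinEquiv.symm) :=
  Matrix.submatrix_diagonal_equiv d finSumFinEquiv.symm

lemma reIdx_one : reIdx m 1 = 1 := Matrix.submatrix_one_equiv finSumFinEquiv.symm

lemma reIdx_inv (V : Matrix (Fin (m + m)) (Fin (m + m)) ℝ) :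
    reIdx m (V.submatrix finSumFinEquiv finSumFinEquiv) = V := by
  rw [reIdx, Matrix.submatrix_submatrix, Equiv.self_comp_symm, Matrix.submatrix_id_id]
end ReIdx

section FinArith
variable {m : ℕ}

lemma pair_cast (hm : 0 < m) (i : Fin m) :
    Fin.castAdd m i + Fin.castAdd m (Fin.rev i) = (⟨m - 1, by omega⟩ : Fin (m + m)) := by
  apply Fin.ext
  rw [Fin.val_add, Fin.coe_castAdd, Fin.coe_castAdd, Fin.val_rev]
  have := i.is_lt
  rw [show (i : ℕ) + (m - ((i : ℕ) + 1)) = m - 1 by omega, Nat.mod_eq_of_lt (by omega)]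

lemma pair_nat (hm : 0 < m) (j : Fin m) :
    Fin.natAdd m j + Fin.natAdd m (Fin.rev j) = (⟨m - 1, by omega⟩ : Fin (m + m)) := by
  apply Fin.ext
  rw [Fin.val_add, Fin.coe_natAdd, Fin.coe_natAdd, Fin.val_rev]
  have := j.is_lt
  rw [show (m + (j : ℕ)) + (m + (m - ((j : ℕ) + 1))) = (m + m) + (m - 1) by omega,
    Nat.add_mod_left, Nat.mod_eq_of_lt (by omega)]

lemma cross_sub₁ (hm : 0 < m) (i j : Fin m) :
    (Fin.castAdd m i : Fin (m + m)) - Fin.natAdd m j = Fin.natAdd m i - Fin.castAdd m j := by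
  haveI : NeZero (m + m) := ⟨by omega⟩
  rw [sub_eq_sub_iff_add_eq_add]
  apply Fin.ext
  rw [Fin.val_add, Fin.val_add, Fin.coe_castAdd, Fin.coe_castAdd, Fin.coe_natAdd, Fin.coe_natAdd,
    show (m + (i : ℕ)) + (m + (j : ℕ)) = (m + m) + ((i : ℕ) + (j : ℕ)) by omega, Nat.add_mod_left]

lemma cross_sub₂ (hm : 0 < m) (i j : Fin m) :
    (Fin.castAdd m i : Fin (m + m)) - Fin.castAdd m j = Fin.natAdd m i - Fin.natAdd m j := by
  haveI : NeZero (m + m) := ⟨by omega⟩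
  rw [sub_eq_sub_iff_add_eq_add]
  apply Fin.ext
  rw [Fin.val_add, Fin.val_add, Fin.coe_castAdd, Fin.coe_castAdd, Fin.coe_natAdd, Fin.coe_natAdd]
  exact congrArg (· % (m + m)) (by omega)
end FinArith

/-- For `V` circulant symmetric positive definite with blocks
`[[V', V''], [V'', V']]`, both `V' + V''F` and `V' - V''F` are positive
definite and `Tr(F_n log V) = log det(V' + V''F) - log det(V' - V''F)`. -/
theorem trace_flip_log_eq_log_det_ratio
    (m : ℕ) (hm : 0 < m)
    (v : Fin (m + m) → ℝ) (hv : ∀ l, v (-l) = v l)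
    (V : Matrix (Fin (m + m)) (Fin (m + m)) ℝ) (hV : V = Matrix.circulant v)
    (hVpd : V.PosDef)
    (V₁ V₂ : Matrix (Fin m) (Fin m) ℝ)
    (hV₁ : ∀ i j, V₁ i j = V (Fin.castAdd m i) (Fin.castAdd m j))
    (hV₂ : ∀ i j, V₂ i j = V (Fin.castAdd m i) (Fin.natAdd m j)) :
    (V₁ + V₂ * flipMat m).PosDef
      ∧ (V₁ - V₂ * flipMat m).PosDef
      ∧ (flipMat (m + m) * mlog V).trace
          = Real.log (V₁ + V₂ * flipMat m).det - Real.log (V₁ - V₂ * flipMat m).det := by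
  haveI : NeZero (m + m) := ⟨by omega⟩
  have hvv : ∀ a b : Fin (m + m), a + b = 0 → v a = v b := by
    intro a b h
    have hb : b = -a := eq_neg_of_add_eq_zero_right h
    rw [hb]
    exact (hv a).symm
  set F := flipMat m with hFdef
  set P := V₁ + V₂ * F with hPdef
  set Q := V₁ - V₂ * F with hQdef
  -- commutation of F with V₁ and V₂
  have hcomm₁ : F * V₁ = V₁ * F := by
    rw [hFdef, flip_mul, mul_flip]
    ext i j
    simp only [Matrix.submatrix_apply, id_eq]
    rw [hV₁, hV₁, hV, Matrix.circulant_apply, Matrix.circulant_apply]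
    apply hvv
    rw [sub_add_sub_comm, add_comm (Fin.castAdd m (Fin.rev i)) (Fin.castAdd m i),
      pair_cast hm i, pair_cast hm j, sub_self]
  have hcomm₂ : F * V₂ = V₂ * F := by
    rw [hFdef, flip_mul, mul_flip]
    ext i j
    simp only [Matrix.submatrix_apply, id_eq]
    rw [hV₂, hV₂, hV, Matrix.circulant_apply, Matrix.circulant_apply]
    apply hvv
    rw [sub_add_sub_comm, add_comm (Fin.castAdd m (Fin.rev i)) (Fin.castAdd m i),
      pair_cast hm i, pair_nat hm j, sub_self]
  -- the block matrix W
  set W : Matrix (Fin m ⊕ Fin m) (Fin m ⊕ Fin m) ℝ := Matrix.fromBlocks V₁ V₂ V₂ V₁ with hWdef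
  have hWV : W = V.submatrix finSumFinEquiv finSumFinEquiv := by
    ext i j
    cases i with
    | inl i =>
      cases j with
      | inl j =>
        simp only [hWdef, Matrix.fromBlocks_apply₁₁, Matrix.submatrix_apply,
          finSumFinEquiv_apply_left]
        exact hV₁ i j
      | inr j =>
        simp only [hWdef, Matrix.fromBlocks_apply₁₂, Matrix.submatrix_apply,
          finSumFinEquiv_apply_left, finSumFinEquiv_apply_right]
        exact hV₂ i j
    | inr i =>
      cases j with
      | inl j =>
        simp only [hWdef, Matrix.fromBlocks_apply₂₁, Matrix.submatrix_apply,
          finSumFinEquiv_apply_left, finSumFinEquiv_apply_right]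
        rw [hV₂, hV, Matrix.circulant_apply, Matrix.circulant_apply]
        exact congrArg v (cross_sub₁ hm i j)
      | inr j =>
        simp only [hWdef, Matrix.fromBlocks_apply₂₂, Matrix.submatrix_apply,
          finSumFinEquiv_apply_right]
        rw [hV₁, hV, Matrix.circulant_apply, Matrix.circulant_apply]
        exact congrArg v (cross_sub₂ hm i j)
  have hWpd : W.PosDef := hWV ▸ posDef_submatrix_equiv hVpd finSumFinEquiv
  -- the orthogonal matrix S
  set T : Matrix (Fin m ⊕ Fin m) (Fin m ⊕ Fin m) ℝ := Matrix.fromBlocks 1 1 F (-F) with hTdef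
  have hFstar : star F = F := flip_star
  have hFF : F * F = 1 := flip_mul_flip
  have hTstar : star T = Matrix.fromBlocks 1 F 1 (-F) := by
    rw [hTdef, star_eq_conjTranspose, Matrix.fromBlocks_conjTranspose,
      Matrix.conjTranspose_one, Matrix.conjTranspose_neg,
      ← star_eq_conjTranspose, hFstar]
  set c : ℝ := (Real.sqrt 2)⁻¹ with hcdef
  have hc2 : c * c * 2 = 1 := by
    rw [hcdef, ← mul_inv, Real.mul_self_sqrt (by norm_num)]
    norm_num
  set S : Matrix (Fin m ⊕ Fin m) (Fin m ⊕ Fin m) ℝ := c • T with hSdef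
  have hSstar : star S = c • star T := by
    rw [hSdef, star_smul, star_trivial]
  have hsmulmul : ∀ (A B : Matrix (Fin m ⊕ Fin m) (Fin m ⊕ Fin m) ℝ),
      (c • A) * (c • B) = (c * c) • (A * B) := by
    intro A B
    rw [Matrix.smul_mul, Matrix.mul_smul, smul_smul]
  have h2blocks : (2 : ℝ) • (1 : Matrix (Fin m ⊕ Fin m) (Fin m ⊕ Fin m) ℝ)
      = Matrix.fromBlocks ((2:ℝ) • (1 : Matrix (Fin m) (Fin m) ℝ)) 0 0
        ((2:ℝ) • (1 : Matrix (Fin m) (Fin m) ℝ)) := by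
    rw [← Matrix.fromBlocks_one, Matrix.fromBlocks_smul, smul_zero]
  have hTT : star T * T = (2 : ℝ) • 1 := by
    rw [hTstar, hTdef, Matrix.fromBlocks_multiply, h2blocks]
    have b11 : (1 : Matrix (Fin m) (Fin m) ℝ) * 1 + F * F
        = (2:ℝ) • (1 : Matrix (Fin m) (Fin m) ℝ) := by
      rw [Matrix.mul_one, hFF, two_smul]
    have b12 : (1 : Matrix (Fin m) (Fin m) ℝ) * 1 + F * (-F) = 0 := by
      rw [Matrix.mul_one, Matrix.mul_neg, hFF, add_neg_cancel]
    have b21 : (1 : Matrix (Fin m) (Fin m) ℝ) * 1 + (-F) * F = 0 := by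
      rw [Matrix.mul_one, Matrix.neg_mul, hFF, add_neg_cancel]
    have b22 : (1 : Matrix (Fin m) (Fin m) ℝ) * 1 + (-F) * (-F)
        = (2:ℝ) • (1 : Matrix (Fin m) (Fin m) ℝ) := by
      rw [Matrix.mul_one, Matrix.neg_mul, Matrix.mul_neg, neg_neg, hFF, two_smul]
    rw [b11, b12, b21, b22]
  have hTT' : T * star T = (2 : ℝ) • 1 := by
    rw [hTstar, hTdef, Matrix.fromBlocks_multiply, h2blocks]
    have b11 : (1 : Matrix (Fin m) (Fin m) ℝ) * 1 + 1 * 1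
        = (2:ℝ) • (1 : Matrix (Fin m) (Fin m) ℝ) := by
      rw [Matrix.mul_one, two_smul]
    have b12 : (1 : Matrix (Fin m) (Fin m) ℝ) * F + 1 * (-F) = 0 := by
      rw [Matrix.one_mul, Matrix.one_mul, add_neg_cancel]
    have b21 : F * 1 + (-F) * 1 = (0 : Matrix (Fin m) (Fin m) ℝ) := by
      rw [Matrix.mul_one, Matrix.mul_one, add_neg_cancel]
    have b22 : F * F + (-F) * (-F) = (2:ℝ) • (1 : Matrix (Fin m) (Fin m) ℝ) := by
      rw [Matrix.neg_mul, Matrix.mul_neg, neg_neg, hFF, two_smul]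
    rw [b11, b12, b21, b22]
  have hSmem : S ∈ unitary (Matrix (Fin m ⊕ Fin m) (Fin m ⊕ Fin m) ℝ) := by
    rw [Unitary.mem_iff]
    constructor
    · rw [hSstar, hSdef, hsmulmul, hTT, smul_smul, hc2, one_smul]
    · rw [hSstar, hSdef, hsmulmul, hTT', smul_smul, hc2, one_smul]
  -- block diagonalization
  have h1 : P * F = V₁ * F + V₂ := by
    rw [hPdef, add_mul, Matrix.mul_assoc, hFF, Matrix.mul_one]
  have h2 : Q * F = V₁ * F - V₂ := by
    rw [hQdef, sub_mul, Matrix.mul_assoc, hFF, Matrix.mul_one]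
  have h3 : F * P = V₁ * F + V₂ := by
    rw [hPdef, mul_add, hcomm₁, ← Matrix.mul_assoc, hcomm₂, Matrix.mul_assoc, hFF,
      Matrix.mul_one]
  have h4 : F * Q = V₁ * F - V₂ := by
    rw [hQdef, mul_sub, hcomm₁, ← Matrix.mul_assoc, hcomm₂, Matrix.mul_assoc, hFF,
      Matrix.mul_one]
  set X : Matrix (Fin m ⊕ Fin m) (Fin m ⊕ Fin m) ℝ := Matrix.fromBlocks P 0 0 Q with hXdef
  have hTX : T * X = Matrix.fromBlocks P Q (F * P) (-(F * Q)) := by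
    rw [hTdef, hXdef, Matrix.fromBlocks_multiply]
    simp only [Matrix.one_mul, Matrix.mul_zero, Matrix.zero_mul, add_zero, zero_add,
      Matrix.neg_mul]
  have hTXT : T * X * star T = (2 : ℝ) • W := by
    rw [hTX, hTstar, Matrix.fromBlocks_multiply]
    have b11 : P * 1 + Q * 1 = (2:ℝ) • V₁ := by
      rw [Matrix.mul_one, Matrix.mul_one, hPdef, hQdef, two_smul]
      abel
    have b12 : P * F + Q * (-F) = (2:ℝ) • V₂ := by
      rw [Matrix.mul_neg, h1, h2, two_smul]
      abel
    have b21 : F * P * 1 + -(F * Q) * 1 = (2:ℝ) • V₂ := by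
      rw [Matrix.mul_one, Matrix.mul_one, h3, h4, two_smul]
      abel
    have b22 : F * P * F + -(F * Q) * -F = (2:ℝ) • V₁ := by
      rw [Matrix.neg_mul, Matrix.mul_neg, neg_neg, h3, h4, add_mul, sub_mul,
        Matrix.mul_assoc V₁ F F, hFF, Matrix.mul_one, two_smul]
      abel
    rw [b11, b12, b21, b22, hWdef, Matrix.fromBlocks_smul]
  have hSXS : S * X * star S = W := by
    rw [hSstar, hSdef, Matrix.smul_mul, hsmulmul, hTXT, smul_smul, hc2, one_smul]
  have hXpd : X.PosDef := by
    have hss : star S * S = 1 := (Unitary.mem_iff.mp hSmem).1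
    have hX : star S * W * S = X := by
      rw [← hSXS]
      calc star S * (S * X * star S) * S
          = (star S * S) * X * (star S * S) := by simp only [Matrix.mul_assoc]
        _ = X := by rw [hss, Matrix.one_mul, Matrix.mul_one]
    exact hX ▸ posDef_conj_unitary hWpd hSmem
  have hPpd : P.PosDef := posDef_fromBlocks₁₁ hXpd
  have hQpd : Q.PosDef := posDef_fromBlocks₂₂ hXpd
  refine ⟨hPpd, hQpd, ?_⟩
  -- spectral decompositions of the blocks
  set eP : Fin m → ℝ := hPpd.1.eigenvalues with hePdef
  set eQ : Fin m → ℝ := hQpd.1.eigenvalues with heQdef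
  set U₁ : Matrix (Fin m) (Fin m) ℝ
    := (Matrix.IsHermitian.eigenvectorUnitary hPpd.1 : Matrix (Fin m) (Fin m) ℝ) with hU₁def
  set U₂ : Matrix (Fin m) (Fin m) ℝ
    := (Matrix.IsHermitian.eigenvectorUnitary hQpd.1 : Matrix (Fin m) (Fin m) ℝ) with hU₂def
  have hU₁mem : U₁ ∈ unitary (Matrix (Fin m) (Fin m) ℝ) :=
    (Matrix.IsHermitian.eigenvectorUnitary hPpd.1).2
  have hU₂mem : U₂ ∈ unitary (Matrix (Fin m) (Fin m) ℝ) :=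
    (Matrix.IsHermitian.eigenvectorUnitary hQpd.1).2
  have hPdec : P = U₁ * Matrix.diagonal eP * star U₁ := by
    have h := hPpd.1.spectral_theorem
    rwa [RCLike.ofReal_real_eq_id, Function.id_comp] at h
  have hQdec : Q = U₂ * Matrix.diagonal eQ * star U₂ := by
    have h := hQpd.1.spectral_theorem
    rwa [RCLike.ofReal_real_eq_id, Function.id_comp] at h
  set Ublk : Matrix (Fin m ⊕ Fin m) (Fin m ⊕ Fin m) ℝ := Matrix.fromBlocks U₁ 0 0 U₂
    with hUblkdef
  have hUblkstar : star Ublk = Matrix.fromBlocks (star U₁) 0 0 (star U₂) := by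
    rw [hUblkdef, star_eq_conjTranspose, Matrix.fromBlocks_conjTranspose,
      Matrix.conjTranspose_zero, ← star_eq_conjTranspose, ← star_eq_conjTranspose]
  have hUblkmem : Ublk ∈ unitary (Matrix (Fin m ⊕ Fin m) (Fin m ⊕ Fin m) ℝ) := by
    rw [Unitary.mem_iff]
    constructor
    · rw [hUblkstar, hUblkdef, Matrix.fromBlocks_multiply]
      simp only [Matrix.mul_zero, Matrix.zero_mul, add_zero, zero_add]
      rw [(Unitary.mem_iff.mp hU₁mem).1, (Unitary.mem_iff.mp hU₂mem).1,
        Matrix.fromBlocks_one]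
    · rw [hUblkstar, hUblkdef, Matrix.fromBlocks_multiply]
      simp only [Matrix.mul_zero, Matrix.zero_mul, add_zero, zero_add]
      rw [(Unitary.mem_iff.mp hU₁mem).2, (Unitary.mem_iff.mp hU₂mem).2,
        Matrix.fromBlocks_one]
  set dblk : Fin m ⊕ Fin m → ℝ := Sum.elim eP eQ with hdblkdef
  have hXdec : X = Ublk * Matrix.diagonal dblk * star Ublk := by
    rw [hdblkdef, show (Matrix.diagonal (Sum.elim eP eQ)
          : Matrix (Fin m ⊕ Fin m) (Fin m ⊕ Fin m) ℝ)
        = Matrix.fromBlocks (Matrix.diagonal eP) 0 0 (Matrix.diagonal eQ) from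
      (Matrix.fromBlocks_diagonal eP eQ).symm]
    rw [hUblkstar, hUblkdef, Matrix.fromBlocks_multiply, Matrix.fromBlocks_multiply]
    simp only [Matrix.mul_zero, Matrix.zero_mul, add_zero, zero_add]
    rw [hXdef, ← hPdec, ← hQdec]
  -- decomposition of V
  have hVW' : V = reIdx m W := by rw [hWV, reIdx_inv]
  set SU : Matrix (Fin m ⊕ Fin m) (Fin m ⊕ Fin m) ℝ := S * Ublk with hSUdef
  have hSUmem : SU ∈ unitary (Matrix (Fin m ⊕ Fin m) (Fin m ⊕ Fin m) ℝ) :=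
    mul_mem hSmem hUblkmem
  set Ufin : Matrix (Fin (m + m)) (Fin (m + m)) ℝ := reIdx m SU with hUfindef
  have hUfinmem : Ufin ∈ unitary (Matrix (Fin (m + m)) (Fin (m + m)) ℝ) := by
    rw [Unitary.mem_iff]
    constructor
    · rw [hUfindef, ← reIdx_star, ← reIdx_mul, (Unitary.mem_iff.mp hSUmem).1, reIdx_one]
    · rw [hUfindef, ← reIdx_star, ← reIdx_mul, (Unitary.mem_iff.mp hSUmem).2, reIdx_one]
  have hWdec : W = SU * Matrix.diagonal dblk * star SU := by
    rw [hSUdef, StarMul.star_mul, ← hSXS, hXdec]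
    simp only [Matrix.mul_assoc]
  have hVdec : V = Ufin * Matrix.diagonal (dblk ∘ ⇑finSumFinEquiv.symm) * star Ufin := by
    rw [hUfindef, ← reIdx_diag, ← reIdx_star, ← reIdx_mul, ← reIdx_mul, ← hWdec, hVW']
  -- the matrix logarithm
  have hmlog : mlog V
      = reIdx m (SU * Matrix.diagonal (Real.log ∘ dblk) * star SU) := by
    have h0 : mlog V = cfc Real.log V := rfl
    rw [h0, hVdec, cfc_conj_diag Ufin hUfinmem (dblk ∘ ⇑finSumFinEquiv.symm) Real.log]
    rw [show Real.log ∘ (dblk ∘ ⇑finSumFinEquiv.symm)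
        = (Real.log ∘ dblk) ∘ ⇑finSumFinEquiv.symm from rfl]
    rw [hUfindef, ← reIdx_star, ← reIdx_diag, ← reIdx_mul, ← reIdx_mul]
  -- the big flip matrix as a block matrix
  have hG : flipMat (m + m) = reIdx m (Matrix.fromBlocks 0 F F 0) := by
    have h : (Matrix.fromBlocks 0 F F 0 : Matrix (Fin m ⊕ Fin m) (Fin m ⊕ Fin m) ℝ)
        = (flipMat (m + m)).submatrix ⇑finSumFinEquiv ⇑finSumFinEquiv := by
      ext i j
      cases i with
      | inl i =>
        have hb1 := i.is_lt
        cases j with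
        | inl j =>
          have hb2 := j.is_lt
          simp only [Matrix.fromBlocks_apply₁₁, Matrix.zero_apply, Matrix.submatrix_apply,
            finSumFinEquiv_apply_left, flipMat, Matrix.of_apply, Fin.coe_castAdd]
          rw [if_neg (by omega)]
        | inr j =>
          have hb2 := j.is_lt
          simp only [Matrix.fromBlocks_apply₁₂, Matrix.submatrix_apply,
            finSumFinEquiv_apply_left, finSumFinEquiv_apply_right, hFdef, flipMat,
            Matrix.of_apply, Fin.coe_castAdd, Fin.coe_natAdd]
          exact if_congr (by omega) rfl rfl
      | inr i =>
        have hb1 := i.is_lt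
        cases j with
        | inl j =>
          have hb2 := j.is_lt
          simp only [Matrix.fromBlocks_apply₂₁, Matrix.submatrix_apply,
            finSumFinEquiv_apply_left, finSumFinEquiv_apply_right, hFdef, flipMat,
            Matrix.of_apply, Fin.coe_castAdd, Fin.coe_natAdd]
          exact if_congr (by omega) rfl rfl
        | inr j =>
          have hb2 := j.is_lt
          simp only [Matrix.fromBlocks_apply₂₂, Matrix.zero_apply, Matrix.submatrix_apply,
            finSumFinEquiv_apply_right, flipMat, Matrix.of_apply, Fin.coe_natAdd]
          rw [if_neg (by omega)]
    rw [h, reIdx_inv]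
  -- the block matrix J
  set J : Matrix (Fin m ⊕ Fin m) (Fin m ⊕ Fin m) ℝ := Matrix.fromBlocks 1 0 0 (-1)
    with hJdef
  have hTJ : T * J = Matrix.fromBlocks 1 (-1) F F := by
    rw [hTdef, hJdef, Matrix.fromBlocks_multiply]
    simp only [Matrix.mul_one, Matrix.mul_zero, Matrix.zero_mul, add_zero, zero_add,
      Matrix.mul_neg, Matrix.one_mul, neg_neg]
  have hTJT : T * J * star T = (2 : ℝ) • Matrix.fromBlocks 0 F F 0 := by
    rw [hTJ, hTstar, Matrix.fromBlocks_multiply]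
    have b11 : (1 : Matrix (Fin m) (Fin m) ℝ) * 1 + (-1) * 1 = 0 := by
      rw [Matrix.mul_one, Matrix.mul_one, add_neg_cancel]
    have b12 : (1 : Matrix (Fin m) (Fin m) ℝ) * F + (-1) * (-F) = (2:ℝ) • F := by
      rw [Matrix.one_mul, Matrix.neg_mul, Matrix.mul_neg, neg_neg, Matrix.one_mul, two_smul]
    have b21 : F * 1 + F * 1 = (2:ℝ) • F := by
      rw [Matrix.mul_one, two_smul]
    have b22 : F * F + F * (-F) = (0 : Matrix (Fin m) (Fin m) ℝ) := by
      rw [Matrix.mul_neg, add_neg_cancel]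
    rw [b11, b12, b21, b22, Matrix.fromBlocks_smul, smul_zero]
  have hGSJS : S * J * star S = Matrix.fromBlocks 0 F F 0 := by
    rw [hSstar, hSdef, Matrix.smul_mul, hsmulmul, hTJT, smul_smul, hc2, one_smul]
  -- trace computation
  have htrconj : ∀ M : Matrix (Fin m ⊕ Fin m) (Fin m ⊕ Fin m) ℝ,
      (S * M * star S).trace = M.trace := by
    intro M
    rw [Matrix.trace_mul_cycle, (Unitary.mem_iff.mp hSmem).1, Matrix.one_mul]
  have hss : star S * S = 1 := (Unitary.mem_iff.mp hSmem).1
  have hlogdblk : Real.log ∘ dblk = Sum.elim (Real.log ∘ eP) (Real.log ∘ eQ) := by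
    funext x
    cases x <;> rfl
  set Dlog : Matrix (Fin m ⊕ Fin m) (Fin m ⊕ Fin m) ℝ
    := Matrix.diagonal (Real.log ∘ dblk) with hDlogdef
  have hJY : J * (Ublk * Dlog * star Ublk)
      = Matrix.fromBlocks (U₁ * Matrix.diagonal (Real.log ∘ eP) * star U₁) 0 0
        (-(U₂ * Matrix.diagonal (Real.log ∘ eQ) * star U₂)) := by
    rw [hDlogdef, hlogdblk, show (Matrix.diagonal (Sum.elim (Real.log ∘ eP) (Real.log ∘ eQ))
          : Matrix (Fin m ⊕ Fin m) (Fin m ⊕ Fin m) ℝ)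
        = Matrix.fromBlocks (Matrix.diagonal (Real.log ∘ eP)) 0 0
            (Matrix.diagonal (Real.log ∘ eQ)) from
      (Matrix.fromBlocks_diagonal _ _).symm]
    rw [hJdef, hUblkstar, hUblkdef, Matrix.fromBlocks_multiply, Matrix.fromBlocks_multiply,
      Matrix.fromBlocks_multiply]
    simp only [Matrix.mul_zero, Matrix.zero_mul, add_zero, zero_add, Matrix.one_mul,
      Matrix.neg_mul, Matrix.mul_neg, neg_zero, Matrix.zero_apply]
  have hGL : Matrix.fromBlocks 0 F F 0 * (SU * Dlog * star SU)
      = S * (J * (Ublk * Dlog * star Ublk)) * star S := by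
    rw [← hGSJS, hSUdef, StarMul.star_mul]
    calc S * J * star S * (S * Ublk * Dlog * (star Ublk * star S))
        = S * J * ((star S * S) * (Ublk * Dlog * (star Ublk * star S))) := by
          simp only [Matrix.mul_assoc]
      _ = S * (J * (Ublk * Dlog * star Ublk)) * star S := by
          rw [hss, Matrix.one_mul]
          simp only [Matrix.mul_assoc]
  calc (flipMat (m + m) * mlog V).trace
      = (reIdx m (Matrix.fromBlocks 0 F F 0)
          * reIdx m (SU * Dlog * star SU)).trace := by rw [hG, hmlog, hDlogdef]
    _ = (reIdx m (Matrix.fromBlocks 0 F F 0 * (SU * Dlog * star SU))).trace := by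
        rw [← reIdx_mul]
    _ = (Matrix.fromBlocks 0 F F 0 * (SU * Dlog * star SU)).trace :=
        trace_submatrix_equiv' _ _
    _ = (J * (Ublk * Dlog * star Ublk)).trace := by rw [hGL, htrconj]
    _ = (U₁ * Matrix.diagonal (Real.log ∘ eP) * star U₁).trace
        + (-(U₂ * Matrix.diagonal (Real.log ∘ eQ) * star U₂)).trace := by
        rw [hJY, trace_fromBlocks']
    _ = (∑ i, Real.log (eP i)) - ∑ i, Real.log (eQ i) := by
        rw [Matrix.trace_neg, trace_conj_diag U₁ hU₁mem, trace_conj_diag U₂ hU₂mem]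
        simp [Function.comp_apply, sub_eq_add_neg]
    _ = Real.log P.det - Real.log Q.det := by
        rw [hePdef, heQdef, sum_log_eigenvalues hPpd, sum_log_eigenvalues hQpd]
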